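/- Consider the unconstrained problem X = {0,1}ⁿ with nominal costs ĉ ∈ ℝⁿ, maximum deviations M⁺, M⁻ ∈ ℝⁿ with M⁺ ≥ 0 and M⁻ ≥ 0, and nominal solution x̂ defined by x̂ᵢ = 1 iff ĉᵢ ≤ 0. Define d⁺, d⁻ by: if ĉᵢ ≤ 0 then dᵢ⁺ = min{Mᵢ⁻ − 2ĉᵢ, Mᵢ⁺} and dᵢ⁻ = Mᵢ⁻; if ĉᵢ > 0 then dᵢ⁺ = Mᵢ⁺ and dᵢ⁻ = min{Mᵢ⁺ + 2ĉᵢ, Mᵢ⁻}. Then (i) 0 ≤ dᵢ⁺ ≤ Mᵢ⁺ and 0 ≤ dᵢ⁻ ≤ Mᵢ⁻ for all i; (ii) x̂ minimizes the regret over {0,1}ⁿ with respect to U(d⁺,d⁻); and (iii) for every (e⁺,e⁻) with 0 ≤ eᵢ⁺ ≤ Mᵢ⁺ and 0 ≤ eᵢ⁻ ≤ Mᵢ⁻ for all i such that x̂ minimizes the regret with respect to U(e⁺,e⁻), one has Σᵢ (eᵢ⁺ + eᵢ⁻) ≤ Σᵢ (dᵢ⁺ + dᵢ⁻); i.e.,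 U(d⁺,d⁻) is a largest uncertainty set (measured by total interval length) for which x̂ remains optimal for the min-max regret problem. -/
import Mathlib


/-- The binary cube `{0,1}ⁿ`, feasible set of the unconstrained combinatorial problem. -/
def binaryCube (n : ℕ) : Set (Fin n → ℝ) := {y | ∀ i, y i = 0 ∨ y i = 1}

/-- The min-max regret of `x` for the unconstrained combinatorial problem with general
interval uncertainty set `U(d⁺,d⁻) = {c : ĉᵢ − dᵢ⁻ ≤ cᵢ ≤ ĉᵢ + dᵢ⁺}`:
`reg(x) = max_{c∈U(d⁺,d⁻)} ( cᵀx − min_{y∈{0,1}ⁿ} cᵀy )`. -/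
noncomputable def ucRegret {n : ℕ} (chat dp dm : Fin n → ℝ) (x : Fin n → ℝ) : ℝ :=
  sSup ((fun c : Fin n → ℝ =>
      (∑ i, c i * x i) - sInf ((fun y => ∑ i, c i * y i) '' binaryCube n)) ''
    {c : Fin n → ℝ | ∀ i, chat i - dm i ≤ c i ∧ c i ≤ chat i + dp i})

lemma cube_inf {n : ℕ} (c : Fin n → ℝ) :
    sInf ((fun y => ∑ i, c i * y i) '' binaryCube n) = ∑ i, min (c i) 0 := by
  apply IsLeast.csInf_eq
  constructor
  · refine ⟨fun i => if c i ≤ 0 then 1 else 0, fun i => ?_, ?_⟩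
    · by_cases h : c i ≤ 0 <;> simp [h]
    · refine Finset.sum_congr rfl fun i _ => ?_
      by_cases h : c i ≤ 0 <;> simp [min_def, h]
  · rintro v ⟨y, hy, rfl⟩
    refine Finset.sum_le_sum fun i _ => ?_
    rcases hy i with h | h <;> simp [h, min_le_left, min_le_right]

lemma regret_eq {n : ℕ} (chat dp dm x : Fin n → ℝ)
    (hdp : ∀ i, 0 ≤ dp i) (hdm : ∀ i, 0 ≤ dm i) (hx : x ∈ binaryCube n) :
    ucRegret chat dp dm x
      = ∑ i, (if x i = 0 then max (dm i - chat i) 0 else max (chat i + dp i) 0) := by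
  have hfun : ∀ c : Fin n → ℝ,
      (∑ i, c i * x i) - sInf ((fun y => ∑ i, c i * y i) '' binaryCube n)
        = ∑ i, (c i * x i - min (c i) 0) := by
    intro c
    rw [cube_inf, Finset.sum_sub_distrib]
  unfold ucRegret
  apply IsGreatest.csSup_eq
  constructor
  · refine ⟨fun i => if x i = 0 then chat i - dm i else chat i + dp i, fun i => ?_, ?_⟩
    · by_cases h : x i = 0 <;> simp [h] <;> linarith [hdp i, hdm i]
    · show (∑ i, _ * x i) - sInf _ = _
      rw [hfun]
      refine Finset.sum_congr rfl fun i _ => ?_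
      rcases hx i with h | h <;>
        simp only [h, if_pos, if_neg, one_ne_zero, min_def, max_def] <;>
        simp [h] <;> split_ifs <;> linarith
  · rintro v ⟨c, hc, rfl⟩
    show (∑ i, c i * x i) - sInf _ ≤ _
    rw [hfun]
    refine Finset.sum_le_sum fun i _ => ?_
    rcases hx i with h | h <;> simp [h, min_def, max_def] <;>
      split_ifs <;> linarith [(hc i).1, (hc i).2]

/-- for the unconstrained problem with nominal solution `x̂` (`x̂ᵢ = 1` iff
`ĉᵢ ≤ 0`) and maximal deviations `M⁺, M⁻ ≥ 0`, the deviations defined by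
`dᵢ⁺ = min{Mᵢ⁻ − 2ĉᵢ, Mᵢ⁺}, dᵢ⁻ = Mᵢ⁻` if `ĉᵢ ≤ 0` and
`dᵢ⁺ = Mᵢ⁺, dᵢ⁻ = min{Mᵢ⁺ + 2ĉᵢ, Mᵢ⁻}` if `ĉᵢ > 0`
(i) are feasible, (ii) keep `x̂` optimal for the min-max regret problem, and
(iii) give a largest (in total interval length) such uncertainty set. -/
theorem largest_uncertainty_set_unconstrained
    {n : ℕ} (chat Mp Mm : Fin n → ℝ) (hMp : ∀ i, 0 ≤ Mp i) (hMm : ∀ i, 0 ≤ Mm i) :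
    (∀ i, 0 ≤ (fun i => if chat i ≤ 0 then min (Mm i - 2 * chat i) (Mp i) else Mp i) i ∧
          (fun i => if chat i ≤ 0 then min (Mm i - 2 * chat i) (Mp i) else Mp i) i ≤ Mp i ∧
          0 ≤ (fun i => if chat i ≤ 0 then Mm i else min (Mp i + 2 * chat i) (Mm i)) i ∧
          (fun i => if chat i ≤ 0 then Mm i else min (Mp i + 2 * chat i) (Mm i)) i ≤ Mm i) ∧
    (∀ x ∈ binaryCube n,
      ucRegret chat
          (fun i => if chat i ≤ 0 then min (Mm i - 2 * chat i) (Mp i) else Mp i)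
          (fun i => if chat i ≤ 0 then Mm i else min (Mp i + 2 * chat i) (Mm i))
          (fun i => if chat i ≤ 0 then (1 : ℝ) else 0) ≤
        ucRegret chat
          (fun i => if chat i ≤ 0 then min (Mm i - 2 * chat i) (Mp i) else Mp i)
          (fun i => if chat i ≤ 0 then Mm i else min (Mp i + 2 * chat i) (Mm i)) x) ∧
    (∀ ep em : Fin n → ℝ,
      (∀ i, 0 ≤ ep i ∧ ep i ≤ Mp i ∧ 0 ≤ em i ∧ em i ≤ Mm i) →
      (∀ x ∈ binaryCube n,
        ucRegret chat ep em (fun i => if chat i ≤ 0 then (1 : ℝ) else 0) ≤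
          ucRegret chat ep em x) →
      (∑ i, (ep i + em i)) ≤
        ∑ i, ((if chat i ≤ 0 then min (Mm i - 2 * chat i) (Mp i) else Mp i) +
          (if chat i ≤ 0 then Mm i else min (Mp i + 2 * chat i) (Mm i)))) := by
  set Dp : Fin n → ℝ := fun i => if chat i ≤ 0 then min (Mm i - 2 * chat i) (Mp i) else Mp i
    with hDp
  set Dm : Fin n → ℝ := fun i => if chat i ≤ 0 then Mm i else min (Mp i + 2 * chat i) (Mm i)
    with hDm
  set xh : Fin n → ℝ := fun i => if chat i ≤ 0 then (1 : ℝ) else 0 with hxh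
  have hxhcube : xh ∈ binaryCube n := by
    intro i; by_cases h : chat i ≤ 0 <;> simp [hxh, h]
  have hfeas : ∀ i, 0 ≤ Dp i ∧ Dp i ≤ Mp i ∧ 0 ≤ Dm i ∧ Dm i ≤ Mm i := by
    intro i
    by_cases h : chat i ≤ 0
    · refine ⟨?_, ?_, ?_, ?_⟩ <;> simp only [hDp, hDm, if_pos h]
      · exact le_min (by linarith [hMm i]) (hMp i)
      · exact min_le_right _ _
      · exact hMm i
      · exact le_rfl
    · refine ⟨?_, ?_, ?_, ?_⟩ <;> simp only [hDp, hDm, if_neg h]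
      · exact hMp i
      · exact le_rfl
      · push_neg at h
        exact le_min (by linarith [hMp i]) (hMm i)
      · exact min_le_right _ _
  refine ⟨hfeas, ?_, ?_⟩
  · -- (ii)
    intro x hx
    rw [regret_eq chat Dp Dm xh (fun i => (hfeas i).1) (fun i => (hfeas i).2.2.1) hxhcube,
        regret_eq chat Dp Dm x (fun i => (hfeas i).1) (fun i => (hfeas i).2.2.1) hx]
    refine Finset.sum_le_sum fun i _ => ?_
    by_cases h : chat i ≤ 0
    · rw [if_neg (by simp [hxh, h] : ¬ xh i = 0)]
      rcases hx i with h0 | h0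
      · rw [if_pos h0]
        have hDpi : Dp i = min (Mm i - 2 * chat i) (Mp i) := by simp [hDp, h]
        have hDmi : Dm i = Mm i := by simp [hDm, h]
        rw [hDpi, hDmi]
        apply max_le
        · exact le_trans (by linarith [min_le_left (Mm i - 2 * chat i) (Mp i)])
            (le_max_left (Mm i - chat i) 0)
        · exact le_max_right _ _
      · rw [if_neg (by rw [h0]; exact one_ne_zero)]
    · rw [if_pos (by simp [hxh, h] : xh i = 0)]
      rcases hx i with h0 | h0
      · rw [if_pos h0]
      · rw [if_neg (by rw [h0]; exact one_ne_zero)]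
        have hDpi : Dp i = Mp i := by simp [hDp, h]
        have hDmi : Dm i = min (Mp i + 2 * chat i) (Mm i) := by simp [hDm, h]
        rw [hDpi, hDmi]
        push_neg at h
        apply max_le
        · exact le_trans (by linarith [min_le_left (Mp i + 2 * chat i) (Mm i)])
            (le_max_left (chat i + Mp i) 0)
        · exact le_max_right _ _
  · -- (iii)
    intro ep em hfe hopt
    have hep : ∀ i, 0 ≤ ep i := fun i => (hfe i).1
    have hem : ∀ i, 0 ≤ em i := fun i => (hfe i).2.2.1
    have key : ∀ i, ep i + em i ≤ Dp i + Dm i := by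
      intro i
      set z : Fin n → ℝ := fun j => if j = i then 1 - xh j else xh j with hz
      have hzcube : z ∈ binaryCube n := by
        intro j
        by_cases hj : j = i
        · subst hj; by_cases h : chat j ≤ 0 <;> simp [hz, hxh, h]
        · by_cases h : chat j ≤ 0 <;> simp [hz, hxh, hj, h]
      have h1 := hopt z hzcube
      rw [regret_eq chat ep em xh hep hem hxhcube,
          regret_eq chat ep em z hep hem hzcube] at h1
      set A : Fin n → ℝ :=
        fun j => if xh j = 0 then max (em j - chat j) 0 else max (chat j + ep j) 0 with hA
      set B : Fin n → ℝ :=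
        fun j => if z j = 0 then max (em j - chat j) 0 else max (chat j + ep j) 0 with hB
      have hterm : A i ≤ B i := by
        have e1 : ∑ j ∈ Finset.univ.erase i, A j + A i = ∑ j, A j :=
          Finset.sum_erase_add _ _ (Finset.mem_univ i)
        have e2 : ∑ j ∈ Finset.univ.erase i, B j + B i = ∑ j, B j :=
          Finset.sum_erase_add _ _ (Finset.mem_univ i)
        have e3 : ∑ j ∈ Finset.univ.erase i, A j = ∑ j ∈ Finset.univ.erase i, B j := by
          refine Finset.sum_congr rfl fun j hj => ?_
          have hj' : j ≠ i := Finset.ne_of_mem_erase hj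
          simp [hA, hB, hz, hj']
        linarith
      by_cases h : chat i ≤ 0
      · have hAi : A i = max (chat i + ep i) 0 := by simp [hA, hxh, h]
        have hBi : B i = max (em i - chat i) 0 := by simp [hB, hz, hxh, h]
        rw [hAi, hBi] at hterm
        have h2 : chat i + ep i ≤ em i - chat i := by
          have h4 := le_trans (le_max_left (chat i + ep i) 0) hterm
          have hr : max (em i - chat i) 0 = em i - chat i :=
            max_eq_left (by linarith [hem i])
          rw [hr] at h4; exact h4
        have hD : Dp i + Dm i = min (Mm i - 2 * chat i) (Mp i) + Mm i := by
          simp [hDp, hDm, h]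
        rw [hD]
        have h3 : ep i ≤ min (Mm i - 2 * chat i) (Mp i) :=
          le_min (by linarith [(hfe i).2.2.2]) (hfe i).2.1
        linarith [(hfe i).2.2.2]
      · have hAi : A i = max (em i - chat i) 0 := by simp [hA, hxh, h]
        have hBi : B i = max (chat i + ep i) 0 := by simp [hB, hz, hxh, h]
        rw [hAi, hBi] at hterm
        push_neg at h
        have h2 : em i - chat i ≤ chat i + ep i := by
          have h4 := le_trans (le_max_left (em i - chat i) 0) hterm
          have hr : max (chat i + ep i) 0 = chat i + ep i :=
            max_eq_left (by linarith [hep i])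
          rw [hr] at h4; exact h4
        have hD : Dp i + Dm i = Mp i + min (Mp i + 2 * chat i) (Mm i) := by
          simp [hDp, hDm, not_le.mpr h]
        rw [hD]
        have h3 : em i ≤ min (Mp i + 2 * chat i) (Mm i) :=
          le_min (by linarith [(hfe i).2.1]) (hfe i).2.2.2
        linarith [(hfe i).2.1]
    calc (∑ i, (ep i + em i)) ≤ ∑ i, (Dp i + Dm i) :=
          Finset.sum_le_sum fun i _ => key i
      _ = _ := by refine Finset.sum_congr rfl fun i _ => ?_; simp [hDp, hDm]
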